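/- If C is a class of topological spaces closed under taking closed subspaces, then the class of C-generated spaces is also closed under taking closed subspaces. -/
import Mathlib


universe u

/-- `C` is invariant under homeomorphism. -/
def HomeoInvariant (C : ∀ (α : Type u) [TopologicalSpace α], Prop) : Prop :=
  ∀ (α β : Type u) [TopologicalSpace α] [TopologicalSpace β], α ≃ₜ β → C α → C β

/-- `C` is closed under taking closed subspaces. -/
def ClosedHereditary (C : ∀ (α : Type u) [TopologicalSpace α], Prop) : Prop :=
  ∀ (α : Type u) [TopologicalSpace α], C α → ∀ F : Set α, IsClosed F → C F

/-- `X` is `C`-generated: if `A ∩ Y` is closed in `Y` for every subspace `Y ∈ C`,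
then `A` is closed in `X`. -/
def CGenerated (C : ∀ (α : Type u) [TopologicalSpace α], Prop)
    (X : Type u) [TopologicalSpace X] : Prop :=
  ∀ A : Set X, (∀ Y : Set X, C Y → IsClosed ((↑) ⁻¹' A : Set Y)) → IsClosed A

theorem closedHereditary_cGenerated
    (C : ∀ (α : Type u) [TopologicalSpace α], Prop)
    (hinv : HomeoInvariant C) (hC : ClosedHereditary C)
    (X : Type u) [TopologicalSpace X] (hX : CGenerated C X)
    (F : Set X) (hF : IsClosed F) : CGenerated C F := by
  intro A hA
  have hembF := hF.isClosedEmbedding_subtypeVal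
  rw [hembF.isClosed_iff_image_isClosed]
  apply hX
  intro Y hY
  set W : Set Y := (Subtype.val) ⁻¹' F with hWdef
  have hWclosed : IsClosed W := hF.preimage continuous_subtype_val
  have hCW : C W := hC Y hY W hWclosed
  set Z : Set F := (Subtype.val) ⁻¹' Y with hZdef
  let φ : W ≃ₜ Z :=
    { toFun := fun w => ⟨⟨(w : Y), w.2⟩, (w : Y).2⟩
      invFun := fun z => ⟨⟨(z : F), z.2⟩, (z : F).2⟩
      left_inv := fun w => rfl
      right_inv := fun z => rfl
      continuous_toFun := by
        apply Continuous.subtype_mk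
        apply Continuous.subtype_mk
        exact continuous_subtype_val.comp continuous_subtype_val
      continuous_invFun := by
        apply Continuous.subtype_mk
        apply Continuous.subtype_mk
        exact continuous_subtype_val.comp continuous_subtype_val }
  have hCZ : C Z := hinv W Z φ hCW
  have hAZ : IsClosed ((↑) ⁻¹' A : Set Z) := hA Z hCZ
  have hS : IsClosed (φ ⁻¹' ((↑) ⁻¹' A) : Set W) := hAZ.preimage φ.continuous
  have key : ((↑) ⁻¹' (Subtype.val '' A) : Set Y)
      = Subtype.val '' (φ ⁻¹' ((↑) ⁻¹' A) : Set W) := by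
    ext y
    constructor
    · rintro ⟨a, haA, ha⟩
      have hyF : (y : X) ∈ F := ha ▸ a.2
      refine ⟨⟨y, hyF⟩, ?_, rfl⟩
      have heq : (⟨(y : X), hyF⟩ : F) = a := Subtype.ext ha.symm
      show (⟨(y : X), hyF⟩ : F) ∈ A
      rwa [heq]
    · rintro ⟨w, hw, rfl⟩
      exact ⟨_, hw, rfl⟩
  rw [key]
  exact hWclosed.isClosedEmbedding_subtypeVal.isClosedMap _ hS
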